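/- For every n ≥ 1 and every real x > 0 one has P_n(x) ≥ ∑_{k=1}^n binom(n−1, k−1)·x^k/k!; equivalently, writing P_n(x) = ∑_{m=1}^n A_{n,m}·x^m, each coefficient satisfies A_{n,m} ≥ (1/m!)·binom(n−1, m−1). -/

import Mathlib

open Polynomial Finset

/-- The polynomials `P n` defined by `P 0 = 1` and
`n * P n = X * ∑_{k=1}^n σ(k) * P (n-k)`, i.e. the coefficients of
`∏ (1 - q^j)^{-x} = ∑ P_n(x) q^n`. -/
noncomputable def P : ℕ → Polynomial ℝ
  | 0 => 1
  | n + 1 => ((n + 1 : ℝ)⁻¹) • (X * ∑ k ∈ Finset.range (n + 1),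
      ((∑ d ∈ (k + 1).divisors, d : ℕ) : ℝ) • P (n - k))


/-- `Δ a b = P (a-1) * P (b+1) - P a * P b`. -/
noncomputable def Δ (a b : ℕ) : Polynomial ℝ :=
  P (a - 1) * P (b + 1) - P a * P b

lemma P_succ_eq (n : ℕ) : P (n+1) = ((n + 1 : ℝ)⁻¹) • (X * ∑ k ∈ Finset.range (n + 1),
      ((∑ d ∈ (k + 1).divisors, d : ℕ) : ℝ) • P (n - k)) := by rw [P]

lemma coeff_P_succ (n m : ℕ) :
    (P (n+1)).coeff (m+1) = ((n+1 : ℝ))⁻¹ * ∑ k ∈ Finset.range (n+1),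
      ((∑ d ∈ (k+1).divisors, d : ℕ) : ℝ) * (P (n-k)).coeff m := by
  rw [P_succ_eq, coeff_smul, coeff_X_mul, finset_sum_coeff]
  simp [coeff_smul, smul_eq_mul]

lemma coeff_P_succ_zero (n : ℕ) : (P (n+1)).coeff 0 = 0 := by
  rw [P_succ_eq, coeff_smul, mul_coeff_zero, coeff_X_zero]
  simp

lemma P_coeff_nonneg (n : ℕ) : ∀ m, 0 ≤ (P n).coeff m := by
  induction n using Nat.strong_induction_on with
  | _ n IH =>
    match n with
    | 0 => intro m; rw [show P 0 = 1 by rw [P], Polynomial.coeff_one]; split <;> norm_num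
    | n + 1 =>
      intro m
      match m with
      | 0 => rw [coeff_P_succ_zero]
      | m + 1 =>
        rw [coeff_P_succ]
        apply mul_nonneg (by positivity)
        apply Finset.sum_nonneg
        intro k hk
        exact mul_nonneg (by positivity) (IH (n - k) (by omega) m)

lemma hockey (r : ℕ) : ∀ n, ∑ j ∈ Finset.range n, j.choose r = n.choose (r+1)
  | 0 => by simp
  | n + 1 => by
      rw [Finset.sum_range_succ, hockey r n, Nat.choose_succ_succ (n := n) (k := r)]
      simp [Nat.succ_eq_add_one]; omega

lemma key (r : ℕ) : ∀ n, ∑ k ∈ Finset.range n, (k+1) * (n-1-k).choose r = (n+1).choose (r+2)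
  | 0 => by simp [Nat.choose_eq_zero_of_lt]
  | n + 1 => by
      have h1 : ∑ k ∈ Finset.range (n+1), (k+1) * (n-k).choose r
          = (∑ k ∈ Finset.range (n+1), (n-k).choose r)
            + ∑ k ∈ Finset.range (n+1), k * (n-k).choose r := by
        rw [← Finset.sum_add_distrib]
        congr 1; ext k; ring
      have h2 : ∑ k ∈ Finset.range (n+1), (n-k).choose r
          = ∑ j ∈ Finset.range (n+1), j.choose r := by
        rw [← Finset.sum_range_reflect]
        apply Finset.sum_congr rfl
        intro k hk
        congr 1
        simp at hk
        omega
      have h3 : ∑ k ∈ Finset.range (n+1), k * (n-k).choose r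
          = ∑ k ∈ Finset.range n, (k+1) * (n-1-k).choose r := by
        rw [Finset.sum_range_succ']
        simp only [Nat.zero_mul, add_zero]
        apply Finset.sum_congr rfl
        intro k hk
        congr 2
        omega
      simp only [Nat.add_sub_cancel]
      rw [h1, h2, h3, hockey, key r n, Nat.choose_succ_succ (n+1) (r+1)]

lemma sigma_ge (k : ℕ) : ((k:ℝ)+1) ≤ ((∑ d ∈ (k+1).divisors, d : ℕ) : ℝ) := by
  have h : (k+1) ≤ ∑ d ∈ (k+1).divisors, d :=
    Finset.single_le_sum (f := fun d => d) (fun i _ => Nat.zero_le i)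
      (Nat.mem_divisors_self _ (by omega))
  exact_mod_cast h

lemma coeff_ge : ∀ n : ℕ, ∀ m : ℕ,
    (n.choose m : ℝ) / (((m+1).factorial : ℕ) : ℝ) ≤ (P (n+1)).coeff (m+1) := by
  intro n
  induction n using Nat.strong_induction_on with
  | _ n IH =>
    intro m
    rw [coeff_P_succ]
    have hpos : (0:ℝ) < (n:ℝ) + 1 := by positivity
    match m with
    | 0 =>
      have hterm : ((n:ℝ)+1) ≤ ∑ k ∈ Finset.range (n+1),
          ((∑ d ∈ (k+1).divisors, d : ℕ) : ℝ) * (P (n-k)).coeff 0 := by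
        have h1 : ((n:ℝ)+1) ≤ ((∑ d ∈ (n+1).divisors, d : ℕ) : ℝ) * (P (n-n)).coeff 0 := by
          rw [Nat.sub_self, show P 0 = 1 by rw [P]]
          simpa using sigma_ge n
        refine h1.trans (Finset.single_le_sum
          (f := fun k => ((∑ d ∈ (k+1).divisors, d : ℕ) : ℝ) * (P (n-k)).coeff 0) ?_
          (Finset.self_mem_range_succ n))
        intro i _
        exact mul_nonneg (by positivity) (P_coeff_nonneg _ _)
      have h2 := mul_le_mul_of_nonneg_left hterm (le_of_lt (inv_pos.mpr hpos))
      calc ((n.choose 0 : ℕ):ℝ) / (((Nat.factorial 1 : ℕ)):ℝ) = 1 := by norm_num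
        _ = ((n:ℝ)+1)⁻¹ * ((n:ℝ)+1) := by field_simp
        _ ≤ _ := h2
    | m + 1 =>
      have hfac : (0:ℝ) < (((m+1).factorial : ℕ) : ℝ) := by
        exact_mod_cast Nat.factorial_pos (m+1)
      have hId : ∑ k ∈ Finset.range n, (((k:ℝ)+1) * ((n-1-k).choose m : ℝ))
          = (((n+1).choose (m+2) : ℕ) : ℝ) := by
        rw [← key m n]
        push_cast
        rfl
      have hsub : ∑ k ∈ Finset.range n,
            (((k:ℝ)+1) * ((n-1-k).choose m : ℝ)) / (((m+1).factorial : ℕ) : ℝ)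
          ≤ ∑ k ∈ Finset.range n,
            ((∑ d ∈ (k+1).divisors, d : ℕ) : ℝ) * (P (n-k)).coeff (m+1) := by
        apply Finset.sum_le_sum
        intro k hk
        have hk' : k < n := Finset.mem_range.mp hk
        have hrw : n - k = (n-1-k) + 1 := by omega
        rw [hrw]
        have hIH := IH (n-1-k) (by omega) m
        have h0 : (0:ℝ) ≤ ((n-1-k).choose m : ℝ) / (((m+1).factorial : ℕ) : ℝ) := by positivity
        calc (((k:ℝ)+1) * ((n-1-k).choose m : ℝ)) / (((m+1).factorial : ℕ) : ℝ)
            = ((k:ℝ)+1) * (((n-1-k).choose m : ℝ) / (((m+1).factorial : ℕ) : ℝ)) := by ring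
          _ ≤ _ := mul_le_mul (sigma_ge k) hIH h0 (by positivity)
      have hext : ∑ k ∈ Finset.range n,
            ((∑ d ∈ (k+1).divisors, d : ℕ) : ℝ) * (P (n-k)).coeff (m+1)
          ≤ ∑ k ∈ Finset.range (n+1),
            ((∑ d ∈ (k+1).divisors, d : ℕ) : ℝ) * (P (n-k)).coeff (m+1) := by
        apply Finset.sum_le_sum_of_subset_of_nonneg
        · exact Finset.range_subset_range.mpr (by omega)
        · intro i _ _
          exact mul_nonneg (by positivity) (P_coeff_nonneg _ _)
      have hstep : (((n+1).choose (m+2) : ℕ) : ℝ) / (((m+1).factorial : ℕ) : ℝ)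
          ≤ ∑ k ∈ Finset.range (n+1),
            ((∑ d ∈ (k+1).divisors, d : ℕ) : ℝ) * (P (n-k)).coeff (m+1) := by
        rw [← hId, Finset.sum_div]
        exact hsub.trans hext
      have h2 := mul_le_mul_of_nonneg_left hstep (le_of_lt (inv_pos.mpr hpos))
      refine le_trans (le_of_eq ?_) h2
      have hnat : (n+1) * n.choose (m+1) = (n+1).choose (m+2) * (m+2) :=
        Nat.add_one_mul_choose_eq n (m+1)
      have hfac2 : (((m+2).factorial : ℕ) : ℝ) = ((m:ℝ)+2) * (((m+1).factorial : ℕ) : ℝ) := by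
        rw [show (m+2) = (m+1)+1 from rfl, Nat.factorial_succ]
        push_cast
        ring
      have hnat' : ((n:ℝ)+1) * (n.choose (m+1) : ℝ) = (((n+1).choose (m+2) : ℕ) : ℝ) * ((m:ℝ)+2) := by
        exact_mod_cast hnat
      rw [hfac2]
      field_simp
      linear_combination hnat'

theorem stmt19 (n : ℕ) (hn : 1 ≤ n) :
    (∀ x : ℝ, 0 < x →
      ∑ k ∈ Finset.Icc 1 n, ((n - 1).choose (k - 1) : ℝ) * x ^ k / (k.factorial : ℝ)
        ≤ (P n).eval x) ∧
    (∀ m : ℕ, 1 ≤ m → m ≤ n →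
      (1 / (m.factorial : ℝ)) * ((n - 1).choose (m - 1) : ℝ) ≤ (P n).coeff m) := by
  obtain ⟨n', rfl⟩ : ∃ n', n = n' + 1 := ⟨n - 1, by omega⟩
  constructor
  · intro x hx
    set N := (P (n'+1)).natDegree + (n'+1) + 1 with hN
    have hdeg : (P (n'+1)).natDegree < N := by omega
    rw [Polynomial.eval_eq_sum_range' hdeg]
    have step1 : ∑ k ∈ Finset.Icc 1 (n'+1),
          ((n'+1-1).choose (k-1) : ℝ) * x ^ k / (k.factorial : ℝ)
        ≤ ∑ k ∈ Finset.Icc 1 (n'+1), (P (n'+1)).coeff k * x ^ k := by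
      apply Finset.sum_le_sum
      intro k hk
      simp only [Finset.mem_Icc] at hk
      obtain ⟨k', rfl⟩ : ∃ k', k = k' + 1 := ⟨k - 1, by omega⟩
      have hcg := coeff_ge n' k'
      have hx1 : (0:ℝ) < x ^ (k'+1) := by positivity
      calc ((n'+1-1).choose (k'+1-1) : ℝ) * x ^ (k'+1) / ((k'+1).factorial : ℝ)
          = ((n'.choose k' : ℝ) / (((k'+1).factorial : ℕ) : ℝ)) * x ^ (k'+1) := by
            simp only [Nat.add_sub_cancel]
            ring
        _ ≤ (P (n'+1)).coeff (k'+1) * x ^ (k'+1) :=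
            mul_le_mul_of_nonneg_right hcg (le_of_lt hx1)
    refine step1.trans ?_
    apply Finset.sum_le_sum_of_subset_of_nonneg
    · intro i hi
      simp only [Finset.mem_Icc] at hi
      simp only [Finset.mem_range]
      omega
    · intro i _ _
      exact mul_nonneg (P_coeff_nonneg _ _) (by positivity)
  · intro m hm1 hm2
    obtain ⟨m', rfl⟩ : ∃ m', m = m' + 1 := ⟨m - 1, by omega⟩
    have hcg := coeff_ge n' m'
    simp only [Nat.add_sub_cancel]
    calc (1 / (((m'+1).factorial : ℕ) : ℝ)) * (n'.choose m' : ℝ)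
        = (n'.choose m' : ℝ) / (((m'+1).factorial : ℕ) : ℝ) := by ring
      _ ≤ _ := hcg
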